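/- Let n ≥ 3 be odd and set d = (n+1)/2. Then the quotient group Λ/ℤS^+ is isomorphic to ℤ × (ℤ/dℤ), where Λ is the weight lattice of SL(n+1) and ℤS^+ is the subgroup generated by σ_1, …, σ_{n−1}. -/

import Mathlib

/-- The fundamental weights `ω_1, …, ω_n` of `SL(n+1)` in the weight lattice
`Λ = ℤⁿ`: `ω_j` is the `j`-th standard basis vector for `1 ≤ j ≤ n`, and by
convention `ω_0 = ω_{n+1} = 0`. -/
def w (n : ℕ) (j : ℕ) : Fin n → ℤ := fun i => if (i : ℕ) + 1 = j then 1 else 0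

/-- The simple roots of `SL(n+1)`: `α_i = 2ω_i − ω_{i−1} − ω_{i+1}` for `1 ≤ i ≤ n`. -/
def sroot (n : ℕ) (i : ℕ) : Fin n → ℤ := 2 • w n i - w n (i - 1) - w n (i + 1)

/-- `σ_i = α_i + α_{i+1}` for `1 ≤ i ≤ n−1`. -/
def sig (n : ℕ) (i : ℕ) : Fin n → ℤ := sroot n i + sroot n (i + 1)

/-- `ℤS⁺`, the subgroup of `Λ` generated by `σ_1, …, σ_{n−1}`. -/
def ZSplus (n : ℕ) : Submodule ℤ (Fin n → ℤ) :=
  Submodule.span ℤ (sig n '' Set.Icc 1 (n - 1))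

lemma w_zero (n j : ℕ) (h : j = 0 ∨ n < j) : w n j = 0 := by
  funext i
  have hi := i.isLt
  simp only [w, Pi.zero_apply, ite_eq_right_iff]
  intro hcond
  omega

lemma w_single (n : ℕ) (i : Fin n) : w n ((i : ℕ) + 1) = Pi.single i 1 := by
  funext k
  have h : ((k : ℕ) + 1 = (i : ℕ) + 1) ↔ (k = i) := by
    rw [Fin.ext_iff]; omega
  simp [w, Pi.single_apply, h, Fin.val_inj]

lemma sig_eq (n k : ℕ) :
    sig n (k + 1) = w n (k + 1) + w n (k + 2) - w n k - w n (k + 3) := by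
  simp only [sig, sroot, Nat.add_sub_cancel]
  abel

lemma sum_w (n j : ℕ) (h1 : 1 ≤ j) (h2 : j ≤ n) (c : Fin n → ℤ) :
    ∑ i, c i * w n j i = c ⟨j - 1, by omega⟩ := by
  rw [Finset.sum_eq_single (⟨j - 1, by omega⟩ : Fin n)]
  · simp only [w]
    rw [if_pos (show j - 1 + 1 = j by omega), mul_one]
  · intro b _ hb
    simp only [w]
    rw [if_neg, mul_zero]
    intro hcond
    apply hb
    apply Fin.ext
    show (b : ℕ) = j - 1
    omega
  · intro h; exact absurd (Finset.mem_univ _) h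

def psiAdd (n : ℕ) : (Fin n → ℤ) →+ ℤ × ZMod ((n + 1) / 2) where
  toFun x := (∑ i : Fin n, (if (i : ℕ) % 2 = 0 then (1 : ℤ) else 0) * x i,
              ((∑ i : Fin n, ((((i : ℕ) + 1) / 2 : ℕ) : ℤ) * x i : ℤ) : ZMod ((n + 1) / 2)))
  map_zero' := by simp
  map_add' x y := by
    simp only [Pi.add_apply, mul_add, Finset.sum_add_distrib, Int.cast_add, Prod.mk_add_mk]

def psi (n : ℕ) : (Fin n → ℤ) →ₗ[ℤ] ℤ × ZMod ((n + 1) / 2) := (psiAdd n).toIntLinearMap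

lemma psi_w (n : ℕ) (hno : Odd n) (j : ℕ) (hj : j ≤ n + 1) :
    psi n (w n j) = (((j % 2 : ℕ) : ℤ), (((j / 2 : ℕ) : ℤ) : ZMod ((n + 1) / 2))) := by
  by_cases h0 : j = 0
  · subst h0
    rw [w_zero n 0 (Or.inl rfl), map_zero]
    simp
    exact Prod.mk_zero_zero.symm
  by_cases hn1 : j = n + 1
  · subst hn1
    rw [w_zero n (n + 1) (Or.inr (by omega)), map_zero]
    have hmod : (n + 1) % 2 = 0 := by
      have := Nat.odd_iff.mp hno; omega
    rw [hmod]
    have hc : ((((n + 1) / 2 : ℕ) : ℤ) : ZMod ((n + 1) / 2)) = 0 := by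
      rw [Int.cast_natCast]
      exact ZMod.natCast_self _
    rw [hc]
    simp
    exact Prod.mk_zero_zero.symm
  · have h1 : 1 ≤ j := by omega
    have h2 : j ≤ n := by omega
    show psiAdd n (w n j) = _
    simp only [psiAdd, AddMonoidHom.coe_mk, ZeroHom.coe_mk]
    rw [sum_w n j h1 h2, sum_w n j h1 h2]
    refine Prod.ext ?_ ?_
    · show (if (j - 1) % 2 = 0 then (1 : ℤ) else 0) = ((j % 2 : ℕ) : ℤ)
      split_ifs with h <;> omega
    · show ((((j - 1 + 1) / 2 : ℕ) : ℤ) : ZMod ((n + 1) / 2)) = _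
      have hj1 : j - 1 + 1 = j := by omega
      rw [hj1]

lemma hker_lemma (n : ℕ) (hn : 3 ≤ n) (hno : Odd n) :
    ZSplus n ≤ LinearMap.ker (psi n) := by
  rw [ZSplus, Submodule.span_le]
  rintro _ ⟨i, hi, rfl⟩
  obtain ⟨hi1, hi2⟩ := Set.mem_Icc.mp hi
  obtain ⟨k, rfl⟩ : ∃ k, i = k + 1 := ⟨i - 1, by omega⟩
  simp only [SetLike.mem_coe, LinearMap.mem_ker]
  rw [sig_eq]
  rw [map_sub, map_sub, map_add]
  rw [psi_w n hno (k + 1) (by omega), psi_w n hno (k + 2) (by omega),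
    psi_w n hno k (by omega), psi_w n hno (k + 3) (by omega)]
  have e1 : ((((k + 1) % 2 : ℕ) : ℤ) + (((k + 2) % 2 : ℕ) : ℤ)) - ((k % 2 : ℕ) : ℤ)
      - (((k + 3) % 2 : ℕ) : ℤ) = 0 := by omega
  have e2 : ((((k + 1) / 2 : ℕ) : ℤ) + (((k + 2) / 2 : ℕ) : ℤ)) - ((k / 2 : ℕ) : ℤ)
      - (((k + 3) / 2 : ℕ) : ℤ) = 0 := by omega
  refine Prod.ext ?_ ?_
  · simpa using e1
  · have h := congrArg (fun t : ℤ => (t : ZMod ((n + 1) / 2))) e2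
    simpa [sub_eq_add_neg] using h

lemma keyA (n : ℕ) (hn : 3 ≤ n) :
    ∀ j, j ≤ n + 1 →
      w n j - ((j % 2 : ℕ) : ℤ) • w n 1 - ((j / 2 : ℕ) : ℤ) • w n 2 ∈ ZSplus n := by
  intro j
  induction j using Nat.strong_induction_on with
  | _ j ih =>
    intro hj
    match j, ih with
    | 0, ih =>
      simpa [w_zero n 0 (Or.inl rfl)] using zero_mem (ZSplus n)
    | 1, ih =>
      simpa using zero_mem (ZSplus n)
    | 2, ih =>
      simpa using zero_mem (ZSplus n)
    | (k + 3), ih =>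
      have m0 := ih k (by omega) (by omega)
      have m1 := ih (k + 1) (by omega) (by omega)
      have m2 := ih (k + 2) (by omega) (by omega)
      have ms : sig n (k + 1) ∈ ZSplus n :=
        Submodule.subset_span ⟨k + 1, Set.mem_Icc.mpr ⟨by omega, by omega⟩, rfl⟩
      have hw : w n (k + 3) = w n (k + 1) + w n (k + 2) - w n k - sig n (k + 1) := by
        rw [sig_eq n k]; abel
      have e1 : (((k + 3) % 2 : ℕ) : ℤ)
          = (((k + 1) % 2 : ℕ) : ℤ) + (((k + 2) % 2 : ℕ) : ℤ) - ((k % 2 : ℕ) : ℤ) := by omega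
      have e2 : (((k + 3) / 2 : ℕ) : ℤ)
          = (((k + 1) / 2 : ℕ) : ℤ) + (((k + 2) / 2 : ℕ) : ℤ) - ((k / 2 : ℕ) : ℤ) := by omega
      have key : w n (k + 3) - (((k + 3) % 2 : ℕ) : ℤ) • w n 1
            - (((k + 3) / 2 : ℕ) : ℤ) • w n 2
          = (w n (k + 1) - (((k + 1) % 2 : ℕ) : ℤ) • w n 1 - (((k + 1) / 2 : ℕ) : ℤ) • w n 2)
            + (w n (k + 2) - (((k + 2) % 2 : ℕ) : ℤ) • w n 1 - (((k + 2) / 2 : ℕ) : ℤ) • w n 2)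
            - (w n k - ((k % 2 : ℕ) : ℤ) • w n 1 - ((k / 2 : ℕ) : ℤ) • w n 2)
            - sig n (k + 1) := by
        rw [hw, e1, e2, sub_smul, add_smul, sub_smul, add_smul]
        abel
      rw [key]
      exact sub_mem (sub_mem (add_mem m1 m2) m0) ms

lemma hd2_lemma (n : ℕ) (hn : 3 ≤ n) (hno : Odd n) :
    (zmultiplesHom ((Fin n → ℤ) ⧸ ZSplus n) (Submodule.Quotient.mk (w n 2)))
      (((n + 1) / 2 : ℕ) : ℤ) = 0 := by
  have h := keyA n hn (n + 1) le_rfl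
  rw [w_zero n (n + 1) (Or.inr (by omega))] at h
  have hmod : (n + 1) % 2 = 0 := by have := Nat.odd_iff.mp hno; omega
  rw [hmod] at h
  simp only [Nat.cast_zero, zero_smul, zero_sub, sub_zero] at h
  have hmem : (((n + 1) / 2 : ℕ) : ℤ) • w n 2 ∈ ZSplus n := by
    simpa using neg_mem h
  show (((n + 1) / 2 : ℕ) : ℤ) • (Submodule.Quotient.mk (w n 2) : (Fin n → ℤ) ⧸ ZSplus n) = 0
  rw [← Submodule.Quotient.mk_smul]
  exact (Submodule.Quotient.mk_eq_zero _).mpr hmem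

/-- The inverse map `ℤ × ℤ/d → Λ/ℤS⁺`. -/
noncomputable def chi (n : ℕ) (hn : 3 ≤ n) (hno : Odd n) :
    ℤ × ZMod ((n + 1) / 2) →+ ((Fin n → ℤ) ⧸ ZSplus n) :=
  (zmultiplesHom _ (Submodule.Quotient.mk (w n 1))).coprod
    (ZMod.lift ((n + 1) / 2)
      ⟨zmultiplesHom _ (Submodule.Quotient.mk (w n 2)), hd2_lemma n hn hno⟩)

lemma chi_apply (n : ℕ) (hn : 3 ≤ n) (hno : Odd n) (a t : ℤ) :
    chi n hn hno (a, (t : ZMod ((n + 1) / 2)))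
      = Submodule.Quotient.mk (a • w n 1 + t • w n 2) := by
  rw [Submodule.Quotient.mk_add]
  simp only [chi, AddMonoidHom.coprod_apply, zmultiplesHom_apply, ZMod.lift_coe,
    Submodule.Quotient.mk_smul]

/-- For `n ≥ 3` odd and `d = (n+1)/2`, the quotient `Λ/ℤS⁺` is isomorphic to
`ℤ × (ℤ/dℤ)`. -/
theorem stmt11 (n : ℕ) (hn : 3 ≤ n) (hno : Odd n) :
    Nonempty (((Fin n → ℤ) ⧸ ZSplus n) ≃+ ℤ × ZMod ((n + 1) / 2)) := by
  have hker := hker_lemma n hn hno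
  let ψ : ((Fin n → ℤ) ⧸ ZSplus n) →ₗ[ℤ] ℤ × ZMod ((n + 1) / 2) :=
    (ZSplus n).liftQ (psi n) hker
  let χ := chi n hn hno
  have hleft : ∀ x : Fin n → ℤ, χ (psi n x) = Submodule.Quotient.mk x := by
    have heq : χ.toIntLinearMap.comp (psi n) = (ZSplus n).mkQ := by
      apply Module.Basis.ext (Pi.basisFun ℤ (Fin n))
      intro i
      have hsingle : (Pi.basisFun ℤ (Fin n)) i = w n ((i : ℕ) + 1) := by
        rw [w_single]
        simp [Pi.basisFun_apply]
      rw [hsingle]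
      show χ (psi n (w n ((i : ℕ) + 1))) = ((ZSplus n).mkQ) (w n ((i : ℕ) + 1))
      rw [psi_w n hno ((i : ℕ) + 1) (by omega), chi_apply]
      rw [Submodule.mkQ_apply, Submodule.Quotient.eq]
      have h := keyA n hn ((i : ℕ) + 1) (by omega)
      have h2 := neg_mem h
      convert h2 using 1
      abel
    intro x
    exact LinearMap.congr_fun heq x
  have hψ1 : ψ (Submodule.Quotient.mk (w n 1)) = ((1 : ℤ), (0 : ZMod ((n + 1) / 2))) := by
    show psi n (w n 1) = _
    rw [psi_w n hno 1 (by omega)]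
    norm_num
  have hψ2 : ψ (Submodule.Quotient.mk (w n 2)) = ((0 : ℤ), (1 : ZMod ((n + 1) / 2))) := by
    show psi n (w n 2) = _
    rw [psi_w n hno 2 (by omega)]
    norm_num
  have hright : ∀ p : ℤ × ZMod ((n + 1) / 2), ψ (χ p) = p := by
    rintro ⟨a, c⟩
    obtain ⟨t, rfl⟩ := ZMod.intCast_surjective c
    rw [chi_apply]
    show psi n (a • w n 1 + t • w n 2) = _
    rw [map_add, map_smul, map_smul, psi_w n hno 1 (by omega), psi_w n hno 2 (by omega)]
    refine Prod.ext ?_ ?_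
    · norm_num
    · norm_num [zsmul_eq_mul]
  refine ⟨⟨⟨ψ, χ, ?_, hright⟩, map_add ψ⟩⟩
  intro q
  obtain ⟨x, rfl⟩ := Submodule.Quotient.mk_surjective _ q
  show χ (ψ (Submodule.Quotient.mk x)) = _
  rw [show ψ (Submodule.Quotient.mk x) = psi n x from Submodule.liftQ_apply _ _ _]
  exact hleft x
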